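/- Let d be an odd positive integer and let U_1, ..., U_k ∈ M_d(ℂ) be matrices whose complex linear span equals the symmetric subspace S_d of M_d(ℂ). Then there is no unitary matrix V ∈ M_d(ℂ) with tr(U_i* V) = 0 for all i = 1, ..., k. Equivalently: for odd d, any matrix V that is trace-orthogonal to every symmetric matrix satisfies Vᵀ = −V, hence det V = 0, so V cannot be unitary. -/

import Mathlib

open Matrix

/-- The symmetric subspace `S_d` of `M_d(ℂ)`: matrices `A` with `Aᵀ = A`. -/
noncomputable def symMatrices (d : ℕ) : Submodule ℂ (Matrix (Fin d) (Fin d) ℂ) where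
  carrier := {A : Matrix (Fin d) (Fin d) ℂ | Aᵀ = A}
  add_mem' := by
    intro a b ha hb
    simp only [Set.mem_setOf_eq, Matrix.transpose_add] at *
    rw [ha, hb]
  zero_mem' := by simp
  smul_mem' := by
    intro c A hA
    simp only [Set.mem_setOf_eq, Matrix.transpose_smul] at *
    rw [hA]

lemma trace_stdBasisMatrix_mul' {d : ℕ} (V : Matrix (Fin d) (Fin d) ℂ) (i j : Fin d) (c : ℂ) :
    trace (Matrix.single i j c * V) = c * V j i := by
  simp [Matrix.trace, Matrix.mul_apply, Matrix.single, Matrix.diag,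
    Finset.sum_ite_eq, ite_and]

/-- For odd d, if U_1, ..., U_k span the symmetric subspace of M_d(ℂ),
then no unitary V is trace-orthogonal to all of them. -/
theorem no_unitary_orthogonal_to_symmetric_span
    {d k : ℕ} (hd : Odd d) (U : Fin k → Matrix (Fin d) (Fin d) ℂ)
    (hspan : Submodule.span ℂ (Set.range U) = symMatrices d) :
    ¬ ∃ V : Matrix (Fin d) (Fin d) ℂ,
        V ∈ Matrix.unitaryGroup (Fin d) ℂ ∧ ∀ i, Matrix.trace ((U i)ᴴ * V) = 0 := by
  rintro ⟨V, hV, horth⟩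
  -- every matrix in the span (= symmetric subspace) is trace-orthogonal to V
  have key : ∀ A ∈ symMatrices d, Matrix.trace (Aᴴ * V) = 0 := by
    intro A hA
    rw [← hspan] at hA
    induction hA using Submodule.span_induction with
    | mem x hx => obtain ⟨i, rfl⟩ := hx; exact horth i
    | zero => simp
    | add x y _ _ hx hy => rw [Matrix.conjTranspose_add, Matrix.add_mul, Matrix.trace_add, hx, hy,
        add_zero]
    | smul c x _ hx => rw [Matrix.conjTranspose_smul, Matrix.smul_mul, Matrix.trace_smul, hx,
        smul_zero]
  -- apply to the symmetric matrices E_ij + E_ji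
  have hentry : ∀ i j : Fin d, V j i + V i j = 0 := by
    intro i j
    have hsym : (Matrix.single i j (1:ℂ) + Matrix.single j i 1) ∈ symMatrices d := by
      show (Matrix.single i j (1:ℂ) + Matrix.single j i 1)ᵀ = _
      ext a b
      simp [Matrix.transpose_apply, Matrix.single, and_comm, add_comm]
    have h := key _ hsym
    have hct : (Matrix.single i j (1:ℂ) + Matrix.single j i 1)ᴴ
        = Matrix.single j i 1 + Matrix.single i j 1 := by
      ext a b
      simp [Matrix.conjTranspose_apply, Matrix.single, and_comm, add_comm]
    rw [hct, Matrix.add_mul, Matrix.trace_add, trace_stdBasisMatrix_mul',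
      trace_stdBasisMatrix_mul', one_mul, one_mul] at h
    linear_combination h
  -- hence V is antisymmetric, so det V = 0 since d is odd
  have hanti : Vᵀ = -V := by
    ext a b
    have := hentry a b
    simp only [Matrix.transpose_apply, Matrix.neg_apply]
    linear_combination this
  have hdet : V.det = 0 := by
    have h1 : V.det = (-V).det := by rw [← hanti, Matrix.det_transpose]
    rw [Matrix.det_neg, Fintype.card_fin, hd.neg_one_pow, neg_one_mul] at h1
    linear_combination h1 / 2
  -- but unitary matrices have nonzero determinant
  have hdu : V.det ≠ 0 := by
    have h1 : Vᴴ * V = 1 := mem_unitaryGroup_iff'.mp hV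
    have := congrArg Matrix.det h1
    rw [Matrix.det_mul, Matrix.det_one] at this
    intro h0
    rw [h0, mul_zero] at this
    exact zero_ne_one this
  exact hdu hdet
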